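/- Let S = (Z₁, …, Zₙ) be a tuple of independent random elements taking values in a measurable space, with g : 𝒵ⁿ → ℝ square-integrable. Then for any δ ∈ (0,1], P{ |g(S) − E[g(S)]| > √((1/δ) · Σᵢ E[Var(g(S) | S^{∖i})]) } ≤ δ, where S^{∖i} denotes all coordinates except the i-th. -/

import Mathlib

open MeasureTheory Real

open MeasureTheory ProbabilityTheory ENNReal

lemma jensen_sq {α : Type*} [MeasurableSpace α] {ν : Measure α} [IsProbabilityMeasure ν]
    {f : α → ℝ} (hf : MemLp f 2 ν) : (∫ x, f x ∂ν)^2 ≤ ∫ x, f x^2 ∂ν := by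
  have h := variance_nonneg f ν
  rw [variance_eq_sub hf] at h
  simp only [Pi.pow_apply] at h
  linarith

lemma es_prod {A B : Type*} [MeasurableSpace A] [MeasurableSpace B]
    (μA : Measure A) (μB : Measure B) [IsProbabilityMeasure μA] [IsProbabilityMeasure μB]
    (g : A × B → ℝ) (hgm : Measurable g) (hg : MemLp g 2 (μA.prod μB)) :
    evariance g (μA.prod μB) ≤
      (∫⁻ b, evariance (fun a => g (a, b)) μA ∂μB) +
      ∫⁻ a, evariance (fun b => g (a, b)) μB ∂μA := by
  set M := ∫ p, g p ∂(μA.prod μB) with hM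
  set h : A → ℝ := fun a => ∫ b, g (a, b) ∂μB with hh
  set k : B → ℝ := fun b => ∫ a, g (a, b) ∂μA with hk
  have hgsq : Integrable (fun p => g p ^ 2) (μA.prod μB) := hg.integrable_sq
  have hgi : Integrable g (μA.prod μB) := hg.integrable one_le_two
  -- sections
  have hsecB : ∀ᵐ a ∂μA, MemLp (fun b => g (a, b)) 2 μB := by
    filter_upwards [hgsq.prod_right_ae] with a ha
    exact (memLp_two_iff_integrable_sq
      (hgm.comp measurable_prodMk_left).aestronglyMeasurable).2 ha
  have hsecA : ∀ᵐ b ∂μB, MemLp (fun a => g (a, b)) 2 μA := by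
    filter_upwards [hgsq.prod_left_ae] with b hb
    exact (memLp_two_iff_integrable_sq
      (hgm.comp measurable_prodMk_right).aestronglyMeasurable).2 hb
  -- h ∈ L²
  have hh_m : StronglyMeasurable h := hgm.stronglyMeasurable.integral_prod_right'
  have hJh : ∀ᵐ a ∂μA, h a ^ 2 ≤ ∫ b, g (a, b) ^ 2 ∂μB := by
    filter_upwards [hsecB] with a ha using jensen_sq ha
  have hh2 : Integrable (fun a => h a ^ 2) μA := by
    refine hgsq.integral_prod_left.mono' (hh_m.pow 2).aestronglyMeasurable ?_
    filter_upwards [hJh] with a ha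
    simpa [abs_of_nonneg (sq_nonneg (h a))] using ha
  have hhL2 : MemLp h 2 μA := (memLp_two_iff_integrable_sq hh_m.aestronglyMeasurable).2 hh2
  -- k ∈ L²
  have hk_m : StronglyMeasurable k := by
    have : StronglyMeasurable fun p : B × A => g (p.2, p.1) :=
      (hgm.comp measurable_swap).stronglyMeasurable
    exact this.integral_prod_right'
  have hJk : ∀ᵐ b ∂μB, k b ^ 2 ≤ ∫ a, g (a, b) ^ 2 ∂μA := by
    filter_upwards [hsecA] with b hb using jensen_sq hb
  have hk2 : Integrable (fun b => k b ^ 2) μB := by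
    refine hgsq.integral_prod_right.mono' (hk_m.pow 2).aestronglyMeasurable ?_
    filter_upwards [hJk] with b hb
    simpa [abs_of_nonneg (sq_nonneg (k b))] using hb
  have hkL2 : MemLp k 2 μB := (memLp_two_iff_integrable_sq hk_m.aestronglyMeasurable).2 hk2
  -- means
  have hM1 : ∫ a, h a ∂μA = M := (integral_prod g hgi).symm
  have hM2 : ∫ b, k b ∂μB = M := (integral_prod_symm g hgi).symm
  -- Step I: total variance
  have hVarSecB_eq : ∀ᵐ a ∂μA,
      variance (fun b => g (a, b)) μB = (∫ b, g (a, b) ^ 2 ∂μB) - h a ^ 2 := by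
    filter_upwards [hsecB] with a ha
    rw [variance_eq_sub ha]; simp only [Pi.pow_apply]; rfl
  have hVarInt : Integrable (fun a => variance (fun b => g (a, b)) μB) μA := by
    exact (hgsq.integral_prod_left.sub hh2).congr (hVarSecB_eq.mono fun a ha => ha.symm)
  have stepI : variance g (μA.prod μB) =
      (∫ a, variance (fun b => g (a, b)) μB ∂μA) + variance h μA := by
    rw [variance_eq_sub hg, variance_eq_sub hhL2]
    simp only [Pi.pow_apply]
    rw [hM1]
    have e1 : ∫ p, g p ^ 2 ∂(μA.prod μB) = ∫ a, ∫ b, g (a, b) ^ 2 ∂μB ∂μA :=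
      integral_prod _ hgsq
    have e2 : ∫ a, ∫ b, g (a, b) ^ 2 ∂μB ∂μA
        = ∫ a, (variance (fun b => g (a, b)) μB + h a ^ 2) ∂μA := by
      refine integral_congr_ae ?_
      filter_upwards [hVarSecB_eq] with a ha; rw [ha]; ring
    rw [e1, e2, integral_add hVarInt hh2]
    ring
  -- Step II: Jensen for variance of h
  have hsnd : MeasurePreserving (Prod.snd : A × B → B) (μA.prod μB) μB :=
    ⟨measurable_snd, by rw [Measure.map_snd_prod]; simp⟩
  have hkprod : MemLp (fun p : A × B => k p.2) 2 (μA.prod μB) :=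
    hkL2.comp_measurePreserving hsnd
  have hq : Integrable (fun p : A × B => (g p - k p.2) ^ 2) (μA.prod μB) := by
    have := (hg.sub hkprod).integrable_sq
    simpa [Pi.sub_apply] using this
  have hqA : Integrable (fun a => ∫ b, (g (a, b) - k b) ^ 2 ∂μB) μA :=
    hq.integral_prod_left
  have hvarh : variance h μA = ∫ a, (h a - M) ^ 2 ∂μA := by
    rw [variance_eq_integral hhL2.aemeasurable, hM1]
  have hJen : ∀ᵐ a ∂μA, (h a - M) ^ 2 ≤ ∫ b, (g (a, b) - k b) ^ 2 ∂μB := by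
    filter_upwards [hsecB] with a ha
    have hdiff : MemLp (fun b => g (a, b) - k b) 2 μB := by
      have := ha.sub hkL2
      exact this
    have hmean : ∫ b, (g (a, b) - k b) ∂μB = h a - M := by
      rw [integral_sub (ha.integrable one_le_two) (hkL2.integrable one_le_two), hM2]
    calc (h a - M) ^ 2 = (∫ b, (g (a, b) - k b) ∂μB) ^ 2 := by rw [hmean]
      _ ≤ ∫ b, (g (a, b) - k b) ^ 2 ∂μB := jensen_sq hdiff
  have hhMint : Integrable (fun a => (h a - M) ^ 2) μA := by
    have := (hhL2.sub (memLp_const M)).integrable_sq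
    simpa [Pi.sub_apply] using this
  have stepII : variance h μA ≤ ∫ b, variance (fun a => g (a, b)) μA ∂μB := by
    rw [hvarh]
    have h1 : ∫ a, (h a - M) ^ 2 ∂μA ≤ ∫ a, ∫ b, (g (a, b) - k b) ^ 2 ∂μB ∂μA :=
      integral_mono_ae hhMint hqA hJen
    have h2 : ∫ a, ∫ b, (g (a, b) - k b) ^ 2 ∂μB ∂μA
        = ∫ b, ∫ a, (g (a, b) - k b) ^ 2 ∂μA ∂μB := by
      exact integral_prod _ hq ▸ integral_prod_symm _ hq
    have h3 : ∫ b, ∫ a, (g (a, b) - k b) ^ 2 ∂μA ∂μB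
        = ∫ b, variance (fun a => g (a, b)) μA ∂μB := by
      refine integral_congr_ae ?_
      filter_upwards [hsecA] with b hb
      rw [variance_eq_integral hb.aemeasurable]
    rw [h2] at h1; rw [h3] at h1; exact h1
  -- Step III: combine and convert to lintegral
  have hVarIntA : Integrable (fun b => variance (fun a => g (a, b)) μA) μB := by
    refine hq.integral_prod_right.congr ?_
    filter_upwards [hsecA] with b hb
    rw [variance_eq_integral hb.aemeasurable]
  have key : variance g (μA.prod μB) ≤
      (∫ b, variance (fun a => g (a, b)) μA ∂μB) +
      ∫ a, variance (fun b => g (a, b)) μB ∂μA := by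
    rw [stepI]; linarith [stepII]
  calc evariance g (μA.prod μB) = ENNReal.ofReal (variance g (μA.prod μB)) :=
        (hg.ofReal_variance_eq).symm
    _ ≤ ENNReal.ofReal ((∫ b, variance (fun a => g (a, b)) μA ∂μB) +
        ∫ a, variance (fun b => g (a, b)) μB ∂μA) := ENNReal.ofReal_le_ofReal key
    _ ≤ ENNReal.ofReal (∫ b, variance (fun a => g (a, b)) μA ∂μB) +
        ENNReal.ofReal (∫ a, variance (fun b => g (a, b)) μB ∂μA) := ENNReal.ofReal_add_le
    _ = (∫⁻ b, evariance (fun a => g (a, b)) μA ∂μB) +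
        ∫⁻ a, evariance (fun b => g (a, b)) μB ∂μA := by
        congr 1
        · rw [ofReal_integral_eq_lintegral_ofReal hVarIntA
            (Filter.Eventually.of_forall fun b => variance_nonneg _ _)]
          refine lintegral_congr_ae ?_
          filter_upwards [hsecA] with b hb using hb.ofReal_variance_eq
        · rw [ofReal_integral_eq_lintegral_ofReal hVarInt
            (Filter.Eventually.of_forall fun a => variance_nonneg _ _)]
          refine lintegral_congr_ae ?_
          filter_upwards [hsecB] with a ha using ha.ofReal_variance_eq

universe u

section helpers
variable {α β γ : Type*} [MeasurableSpace α] [MeasurableSpace β] [MeasurableSpace γ]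

lemma lin_evar (ν : Measure γ) [SFinite ν] {H : α × γ → ℝ} (hH : Measurable H) :
    Measurable (fun a => evariance (fun c => H (a, c)) ν) := by
  have hc : StronglyMeasurable (fun a => ∫ c, H (a, c) ∂ν) :=
    hH.stronglyMeasurable.integral_prod_right'
  have he : (fun a => evariance (fun c => H (a, c)) ν)
      = fun a => ∫⁻ c, ENNReal.ofReal ((H (a, c) - ∫ c', H (a, c') ∂ν) ^ 2) ∂ν :=
    funext fun a => evariance_eq_lintegral_ofReal _ _
  rw [he]
  exact Measurable.lintegral_prod_right'
    (ENNReal.measurable_ofReal.comp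
      ((hH.sub (hc.measurable.comp measurable_fst)).pow_const 2))

lemma evariance_comp_equiv (e : α ≃ᵐ β) {μ : Measure α} {ν : Measure β}
    (h : MeasurePreserving (⇑e) μ ν) (f : β → ℝ) (hf : Measurable f) :
    evariance (fun x => f (e x)) μ = evariance f ν := by
  rw [evariance_eq_lintegral_ofReal, evariance_eq_lintegral_ofReal,
    h.integral_comp e.measurableEmbedding f]
  exact h.lintegral_comp
    (ENNReal.measurable_ofReal.comp ((hf.sub measurable_const).pow_const 2))

end helpers

lemma insertNth_update_succAbove {n : ℕ} {α : Fin (n+1) → Type u} (i : Fin (n+1)) (a : α i)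
    (f : ∀ j, α (i.succAbove j)) (j : Fin n) (y : α (i.succAbove j)) :
    Function.update (i.insertNth a f) (i.succAbove j) y = i.insertNth a (Function.update f j y) := by
  ext m
  refine Fin.succAboveCases i ?_ ?_ m
  · rw [Function.update_of_ne (Fin.succAbove_ne i j).symm]
    simp
  · intro k
    rcases eq_or_ne k j with rfl | hk
    · simp
    · rw [Function.update_of_ne ((Fin.succAbove_right_injective (p := i)).ne hk)]
      simp [Function.update_of_ne hk]

set_option maxHeartbeats 1000000 in
/-- Efron–Stein inequality, `evariance` form. -/
lemma efron_stein_evariance : ∀ (n : ℕ) {Ω : Fin n → Type u} [∀ i, MeasurableSpace (Ω i)]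
    (μ : ∀ i, Measure (Ω i)) [∀ i, IsProbabilityMeasure (μ i)]
    (g : (∀ i, Ω i) → ℝ), Measurable g → MemLp g 2 (Measure.pi μ) →
    evariance g (Measure.pi μ) ≤
      ∑ i, ∫⁻ ω', evariance (fun x => g (Function.update ω' i x)) (μ i) ∂Measure.pi μ := by
  intro n
  induction n with
  | zero =>
    intro Ω _ μ _ g hgm hg
    have hx : Subsingleton (∀ i : Fin 0, Ω i) := ⟨fun a b => funext fun i => i.elim0⟩
    set x₀ : ∀ i : Fin 0, Ω i := fun i => i.elim0
    have hc : g = fun _ => g x₀ := funext fun y => congrArg g (Subsingleton.elim y x₀)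
    have h0 : evariance g (Measure.pi μ) = 0 := by
      rw [hc, evariance_eq_lintegral_ofReal]
      simp [integral_const]
    rw [h0]
    exact bot_le
  | succ n ih =>
    intro Ω _ μ _ g hgm hg
    set e := MeasurableEquiv.piFinSuccAbove Ω 0 with he
    set Pr := Measure.pi (fun j => μ ((0 : Fin (n+1)).succAbove j)) with hPr
    have hmp : MeasurePreserving (⇑e) (Measure.pi μ) ((μ 0).prod Pr) :=
      measurePreserving_piFinSuccAbove μ 0
    have hmps : MeasurePreserving (⇑e.symm) ((μ 0).prod Pr) (Measure.pi μ) := hmp.symm e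
    set G : Ω 0 × (∀ j, Ω ((0 : Fin (n+1)).succAbove j)) → ℝ := fun p => g (e.symm p) with hG
    have hGm : Measurable G := hgm.comp e.symm.measurable
    have hGL : MemLp G 2 ((μ 0).prod Pr) := hg.comp_measurePreserving hmps
    have hesymm : ∀ (a : Ω 0) (r : ∀ j, Ω ((0 : Fin (n+1)).succAbove j)),
        e.symm (a, r) = Fin.insertNth 0 a r := by
      intro a r
      rw [MeasurableEquiv.piFinSuccAbove_symm_apply]
      rfl
    -- update identities
    have hU1 : ∀ a r x, Function.update (e.symm (a, r)) 0 x = e.symm (x, r) := by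
      intro a r x
      rw [hesymm, hesymm, Fin.update_insertNth]
    have hU2 : ∀ a r j y, Function.update (e.symm (a, r)) ((0 : Fin (n+1)).succAbove j) y
        = e.symm (a, Function.update r j y) := by
      intro a r j y
      rw [hesymm, hesymm, insertNth_update_succAbove]
    -- transfer of total evariance
    have hvar0 : evariance g (Measure.pi μ) = evariance G ((μ 0).prod Pr) :=
      (evariance_comp_equiv e.symm hmps g hgm).symm
    -- es_prod
    have hprod := es_prod (μ 0) Pr G hGm hGL
    -- term 1 : coordinate 0
    have hΦ0m : Measurable (fun ω' => evariance (fun x => g (Function.update ω' 0 x)) (μ 0)) := by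
      exact lin_evar (μ 0) (hgm.comp measurable_update')
    have hT1 : ∫⁻ ω', evariance (fun x => g (Function.update ω' 0 x)) (μ 0) ∂Measure.pi μ
        = ∫⁻ b, evariance (fun a => G (a, b)) (μ 0) ∂Pr := by
      rw [← hmps.lintegral_comp hΦ0m]
      have hptwise : ∀ p : Ω 0 × (∀ j, Ω ((0 : Fin (n+1)).succAbove j)),
          evariance (fun x => g (Function.update (e.symm p) 0 x)) (μ 0)
            = evariance (fun x => G (x, p.2)) (μ 0) := by
        rintro ⟨a, r⟩
        congr 1
        funext x
        rw [hU1 a r x]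
      calc ∫⁻ p, evariance (fun x => g (Function.update (e.symm p) 0 x)) (μ 0) ∂(μ 0).prod Pr
          = ∫⁻ p, evariance (fun x => G (x, p.2)) (μ 0) ∂(μ 0).prod Pr :=
            lintegral_congr fun p => hptwise p
        _ = ∫⁻ a, ∫⁻ b, evariance (fun x => G (x, b)) (μ 0) ∂Pr ∂μ 0 := by
            refine lintegral_prod _ ?_ |>.trans rfl
            exact ((lin_evar (μ 0) (hGm.comp measurable_swap)).comp measurable_snd).aemeasurable
        _ = ∫⁻ b, evariance (fun a => G (a, b)) (μ 0) ∂Pr := by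
            rw [lintegral_const]
            simp
    -- term 2 : the rest, via IH
    have hsecB : ∀ᵐ a ∂μ 0, MemLp (fun r => G (a, r)) 2 Pr := by
      filter_upwards [hGL.integrable_sq.prod_right_ae] with a ha
      exact (memLp_two_iff_integrable_sq
        (hGm.comp measurable_prodMk_left).aestronglyMeasurable).2 ha
    have hKm : ∀ j : Fin n, Measurable (fun a => ∫⁻ r',
        evariance (fun y => G (a, Function.update r' j y)) (μ ((0:Fin (n+1)).succAbove j)) ∂Pr) := by
      intro j
      have hup : Measurable (fun q : (Ω 0 × (∀ j', Ω ((0:Fin (n+1)).succAbove j')))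
          × Ω ((0:Fin (n+1)).succAbove j) => G (q.1.1, Function.update q.1.2 j q.2)) := by
        apply hGm.comp
        exact (measurable_fst.comp measurable_fst).prodMk
          (measurable_update'.comp ((measurable_snd.comp measurable_fst).prodMk measurable_snd))
      have : Measurable (fun p : Ω 0 × (∀ j', Ω ((0:Fin (n+1)).succAbove j')) =>
          evariance (fun y => G (p.1, Function.update p.2 j y)) (μ ((0:Fin (n+1)).succAbove j))) :=
        lin_evar _ hup
      exact Measurable.lintegral_prod_right' this
    have hT2 : ∫⁻ a, evariance (fun r => G (a, r)) Pr ∂μ 0 ≤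
        ∑ j : Fin n, ∫⁻ a, ∫⁻ r', evariance (fun y => G (a, Function.update r' j y))
          (μ ((0:Fin (n+1)).succAbove j)) ∂Pr ∂μ 0 := by
      calc ∫⁻ a, evariance (fun r => G (a, r)) Pr ∂μ 0
          ≤ ∫⁻ a, ∑ j : Fin n, ∫⁻ r', evariance (fun y => G (a, Function.update r' j y))
              (μ ((0:Fin (n+1)).succAbove j)) ∂Pr ∂μ 0 := by
            refine lintegral_mono_ae ?_
            filter_upwards [hsecB] with a ha
            exact ih (fun j => μ ((0:Fin (n+1)).succAbove j))
              (fun r => G (a, r)) (hGm.comp measurable_prodMk_left) ha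
        _ = ∑ j : Fin n, ∫⁻ a, ∫⁻ r', evariance (fun y => G (a, Function.update r' j y))
              (μ ((0:Fin (n+1)).succAbove j)) ∂Pr ∂μ 0 := by
            exact lintegral_finset_sum _ (fun j _ => hKm j)
    -- transfer term for coordinate succAbove 0 j
    have hT3 : ∀ j : Fin n,
        ∫⁻ ω', evariance (fun y => g (Function.update ω' ((0:Fin (n+1)).succAbove j) y))
          (μ ((0:Fin (n+1)).succAbove j)) ∂Measure.pi μ
        = ∫⁻ a, ∫⁻ r', evariance (fun y => G (a, Function.update r' j y))
            (μ ((0:Fin (n+1)).succAbove j)) ∂Pr ∂μ 0 := by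
      intro j
      have hΦm : Measurable (fun ω' => evariance
          (fun y => g (Function.update ω' ((0:Fin (n+1)).succAbove j) y))
          (μ ((0:Fin (n+1)).succAbove j))) :=
        lin_evar _ (hgm.comp measurable_update')
      rw [← hmps.lintegral_comp hΦm]
      have hptwise : ∀ p : Ω 0 × (∀ j', Ω ((0 : Fin (n+1)).succAbove j')),
          evariance (fun y => g (Function.update (e.symm p) ((0:Fin (n+1)).succAbove j) y))
            (μ ((0:Fin (n+1)).succAbove j))
          = evariance (fun y => G (p.1, Function.update p.2 j y))
            (μ ((0:Fin (n+1)).succAbove j)) := by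
        rintro ⟨a, r⟩
        congr 1
        funext y
        rw [hU2 a r j y]
      rw [lintegral_congr hptwise]
      refine lintegral_prod _ ?_
      have hup : Measurable (fun q : (Ω 0 × (∀ j', Ω ((0:Fin (n+1)).succAbove j')))
          × Ω ((0:Fin (n+1)).succAbove j) => G (q.1.1, Function.update q.1.2 j q.2)) := by
        apply hGm.comp
        exact (measurable_fst.comp measurable_fst).prodMk
          (measurable_update'.comp ((measurable_snd.comp measurable_fst).prodMk measurable_snd))
      exact (lin_evar _ hup).aemeasurable
    -- combine
    rw [Fin.sum_univ_succAbove _ 0, hvar0, hT1]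
    calc evariance G ((μ 0).prod Pr)
        ≤ (∫⁻ b, evariance (fun a => G (a, b)) (μ 0) ∂Pr) +
          ∫⁻ a, evariance (fun r => G (a, r)) Pr ∂μ 0 := hprod
      _ ≤ (∫⁻ b, evariance (fun a => G (a, b)) (μ 0) ∂Pr) +
          ∑ j : Fin n, ∫⁻ a, ∫⁻ r', evariance (fun y => G (a, Function.update r' j y))
            (μ ((0:Fin (n+1)).succAbove j)) ∂Pr ∂μ 0 := add_le_add_right hT2 _
      _ = (∫⁻ b, evariance (fun a => G (a, b)) (μ 0) ∂Pr) +
          ∑ j : Fin n, ∫⁻ ω', evariance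
            (fun y => g (Function.update ω' ((0:Fin (n+1)).succAbove j) y))
            (μ ((0:Fin (n+1)).succAbove j)) ∂Measure.pi μ := by
          congr 1
          exact Finset.sum_congr rfl fun j _ => (hT3 j).symm

lemma lintegral_update_pi {n : ℕ} {Ω : Fin n → Type u} [∀ i, MeasurableSpace (Ω i)]
    (μ : ∀ i, Measure (Ω i)) [∀ i, IsProbabilityMeasure (μ i)]
    {f : (∀ i, Ω i) → ℝ≥0∞} (hf : Measurable f) (i : Fin n) :
    ∫⁻ ω', ∫⁻ x, f (Function.update ω' i x) ∂μ i ∂Measure.pi μ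
      = ∫⁻ ω, f ω ∂Measure.pi μ := by
  haveI : ∀ j, Nonempty (Ω j) := fun j => by
    by_contra h
    rw [not_nonempty_iff] at h
    have h1 : (μ j) Set.univ = 1 := measure_univ
    rw [Set.univ_eq_empty_iff.2 h, measure_empty] at h1
    exact zero_ne_one h1
  have x₀ : ∀ j, Ω j := Classical.arbitrary _
  have h1 : ∫⁻ ω', ∫⁻ x, f (Function.update ω' i x) ∂μ i ∂Measure.pi μ
      = ∫⁻ ω', (∫⋯∫⁻_{i}, f ∂μ) ω' ∂Measure.pi μ := by
    refine lintegral_congr fun ω' => ?_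
    rw [lmarginal_singleton]
  have hmm : Measurable (∫⋯∫⁻_{i}, f ∂μ) := hf.lmarginal μ
  have hu : (Finset.univ : Finset (Fin n)) = Finset.univ.erase i ∪ {i} := by
    ext j
    by_cases h : j = i <;> simp [h]
  have hdis : Disjoint (Finset.univ.erase i) ({i} : Finset (Fin n)) :=
    Finset.disjoint_singleton_right.2 (Finset.notMem_erase i _)
  rw [h1, lintegral_eq_lmarginal_univ x₀, lintegral_eq_lmarginal_univ x₀,
    hu, lmarginal_union μ _ hmm hdis, lmarginal_union μ f hf hdis]
  congr 1
  funext ω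
  have h2 : (∫⋯∫⁻_{i}, ∫⋯∫⁻_{i}, f ∂μ ∂μ) ω
      = ∫⁻ x, (∫⋯∫⁻_{i}, f ∂μ) (Function.update ω i x) ∂μ i := by
    rw [lmarginal_singleton]
  have hconst : ∀ x : Ω i, (∫⋯∫⁻_{i}, f ∂μ) (Function.update ω i x) = (∫⋯∫⁻_{i}, f ∂μ) ω :=
    fun x => lmarginal_update_of_mem μ (Finset.mem_singleton_self i) f ω x
  rw [h2, lintegral_congr hconst, lintegral_const, measure_univ, mul_one]

set_option maxHeartbeats 1000000 in
/-- Chebyshev + Efron–Stein pointwise concentration: the deviation of g(S) from its mean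
exceeds √((1/δ)·Σᵢ E[Var(g(S)|S^{∖i})]) with probability at most δ.
Independent coordinates are modelled by a product measure; the conditional variance given
all coordinates except i is the variance over the i-th coordinate. -/
theorem chebyshev_efron_stein {n : ℕ} {Ω : Fin n → Type*}
    [∀ i, MeasurableSpace (Ω i)]
    (μ : ∀ i, Measure (Ω i)) [∀ i, IsProbabilityMeasure (μ i)]
    (g : (∀ i, Ω i) → ℝ) (hg : MemLp g 2 (Measure.pi μ))
    (δ : ℝ) (hδ0 : 0 < δ) (hδ1 : δ ≤ 1) :
    (Measure.pi μ) {ω | Real.sqrt ((1 / δ) * ∑ i, ∫ ω',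
        (∫ x, (g (Function.update ω' i x)
            - ∫ y, g (Function.update ω' i y) ∂(μ i)) ^ 2 ∂(μ i)) ∂(Measure.pi μ))
      < |g ω - ∫ ω', g ω' ∂(Measure.pi μ)|}
      ≤ ENNReal.ofReal δ := by
  classical
  set m := ∫ ω', g ω' ∂(Measure.pi μ) with hm
  set g₁ : (∀ i, Ω i) → ℝ := hg.aestronglyMeasurable.mk g with hg₁def
  have hg₁sm : StronglyMeasurable g₁ := hg.aestronglyMeasurable.stronglyMeasurable_mk
  have hgg₁ : g =ᵐ[Measure.pi μ] g₁ := hg.aestronglyMeasurable.ae_eq_mk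
  have hg₁meas : Measurable g₁ := hg₁sm.measurable
  have hg₁ : MemLp g₁ 2 (Measure.pi μ) := MemLp.ae_eq hgg₁ hg
  have hnull : (Measure.pi μ) {ω | ¬ g ω = g₁ ω} = 0 := ae_iff.1 hgg₁
  obtain ⟨N, hNsub, hNmeas, hNnull⟩ := exists_measurable_superset_of_null hnull
  -- sections of g and g₁ agree a.e.
  have hsect : ∀ i : Fin n, ∀ᵐ ω' ∂Measure.pi μ, ∀ᵐ x ∂μ i,
      g (Function.update ω' i x) = g₁ (Function.update ω' i x) := by
    intro i
    have hind : Measurable (N.indicator (fun _ => (1:ℝ≥0∞))) :=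
      measurable_const.indicator hNmeas
    have h0 : ∫⁻ ω', ∫⁻ x, N.indicator (fun _ => (1:ℝ≥0∞)) (Function.update ω' i x)
        ∂μ i ∂Measure.pi μ = 0 := by
      rw [lintegral_update_pi μ hind i, lintegral_indicator hNmeas]
      simp [hNnull]
    have hinm : Measurable fun ω' =>
        ∫⁻ x, N.indicator (fun _ => (1:ℝ≥0∞)) (Function.update ω' i x) ∂μ i :=
      Measurable.lintegral_prod_right' (hind.comp measurable_update')
    filter_upwards [(lintegral_eq_zero_iff hinm).1 h0] with ω' hω'
    have h2 : ∫⁻ x, N.indicator (fun _ => (1:ℝ≥0∞)) (Function.update ω' i x) ∂μ i = 0 := hω'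
    have h3 := (lintegral_eq_zero_iff (hind.comp (measurable_update ω'))).1 h2
    filter_upwards [h3] with x hx
    by_contra hne
    have hxN : Function.update ω' i x ∈ N := hNsub hne
    simp [Set.indicator_of_mem hxN] at hx
  set L : Fin n → ℝ≥0∞ := fun i =>
    ∫⁻ ω', evariance (fun x => g₁ (Function.update ω' i x)) (μ i) ∂Measure.pi μ with hLdef
  have hsqm : Measurable fun ω => ENNReal.ofReal (g₁ ω ^ 2) :=
    ENNReal.measurable_ofReal.comp (hg₁meas.pow_const 2)
  have hfin : ∀ i : Fin n, ∫⁻ ω', ∫⁻ x,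
      ENNReal.ofReal (g₁ (Function.update ω' i x) ^ 2) ∂μ i ∂Measure.pi μ ≠ ⊤ := by
    intro i
    rw [lintegral_update_pi μ hsqm i]
    have h5 := hg₁.integrable_sq.hasFiniteIntegral
    have h6 : ∫⁻ ω, ENNReal.ofReal (g₁ ω ^ 2) ∂Measure.pi μ
        = ∫⁻ ω, (‖g₁ ω ^ 2‖₊ : ℝ≥0∞) ∂Measure.pi μ :=
      lintegral_congr fun ω => (Real.enorm_eq_ofReal (sq_nonneg _)).symm
    rw [h6]
    exact h5.ne
  have hsecmem : ∀ i : Fin n, ∀ᵐ ω' ∂Measure.pi μ,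
      MemLp (fun x => g₁ (Function.update ω' i x)) 2 (μ i) := by
    intro i
    have hae := ae_lt_top (Measurable.lintegral_prod_right' (hsqm.comp measurable_update'))
      (hfin i)
    filter_upwards [hae] with ω' hω'
    refine (memLp_two_iff_integrable_sq
      ((hg₁meas.comp (measurable_update ω')).aestronglyMeasurable)).2 ?_
    refine ⟨((hg₁meas.comp (measurable_update ω')).pow_const 2).aestronglyMeasurable, ?_⟩
    have h7 : ∫⁻ x, (‖g₁ (Function.update ω' i x) ^ 2‖₊ : ℝ≥0∞) ∂μ i
        = ∫⁻ x, ENNReal.ofReal (g₁ (Function.update ω' i x) ^ 2) ∂μ i :=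
      lintegral_congr fun x => Real.enorm_eq_ofReal (sq_nonneg _)
    show ∫⁻ x, (‖g₁ (Function.update ω' i x) ^ 2‖₊ : ℝ≥0∞) ∂μ i < ⊤
    rw [h7]
    exact hω'
  have hLfin : ∀ i : Fin n, L i ≠ ⊤ := by
    intro i
    have hb : L i ≤ ∫⁻ ω', ∫⁻ x,
        ENNReal.ofReal (g₁ (Function.update ω' i x) ^ 2) ∂μ i ∂Measure.pi μ := by
      refine lintegral_mono_ae ?_
      filter_upwards [hsecmem i] with ω' hsec
      calc evariance (fun x => g₁ (Function.update ω' i x)) (μ i)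
          = ENNReal.ofReal (variance (fun x => g₁ (Function.update ω' i x)) (μ i)) :=
            hsec.ofReal_variance_eq.symm
        _ ≤ ENNReal.ofReal (∫ x, g₁ (Function.update ω' i x) ^ 2 ∂μ i) := by
            apply ENNReal.ofReal_le_ofReal
            rw [variance_eq_sub hsec]
            simp only [Pi.pow_apply]
            nlinarith [sq_nonneg (∫ x, g₁ (Function.update ω' i x) ∂μ i)]
        _ ≤ ∫⁻ x, ENNReal.ofReal (g₁ (Function.update ω' i x) ^ 2) ∂μ i := by
            rw [ofReal_integral_eq_lintegral_ofReal hsec.integrable_sq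
              (Filter.Eventually.of_forall fun x => sq_nonneg _)]
    exact ne_top_of_le_ne_top (hfin i) hb
  have hinner_m : ∀ i : Fin n, StronglyMeasurable fun ω' =>
      ∫ x, (g₁ (Function.update ω' i x) - ∫ y, g₁ (Function.update ω' i y) ∂μ i) ^ 2 ∂μ i := by
    intro i
    have hc : StronglyMeasurable fun ω' => ∫ y, g₁ (Function.update ω' i y) ∂μ i :=
      (hg₁meas.comp measurable_update').stronglyMeasurable.integral_prod_right'
    have hint : Measurable fun q : (∀ j, Ω j) × Ω i =>
        (g₁ (Function.update q.1 i q.2) - ∫ y, g₁ (Function.update q.1 i y) ∂μ i) ^ 2 :=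
      ((hg₁meas.comp measurable_update').sub (hc.measurable.comp measurable_fst)).pow_const 2
    exact hint.stronglyMeasurable.integral_prod_right'
  have hBi : ∀ i : Fin n,
      ∫ ω', (∫ x, (g (Function.update ω' i x)
        - ∫ y, g (Function.update ω' i y) ∂μ i) ^ 2 ∂μ i) ∂Measure.pi μ = (L i).toReal := by
    intro i
    have e1 : (fun ω' => ∫ x, (g (Function.update ω' i x)
          - ∫ y, g (Function.update ω' i y) ∂μ i) ^ 2 ∂μ i)
        =ᵐ[Measure.pi μ] fun ω' => ∫ x, (g₁ (Function.update ω' i x)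
          - ∫ y, g₁ (Function.update ω' i y) ∂μ i) ^ 2 ∂μ i := by
      filter_upwards [hsect i] with ω' hω'
      have hmean : ∫ y, g (Function.update ω' i y) ∂μ i
          = ∫ y, g₁ (Function.update ω' i y) ∂μ i := integral_congr_ae hω'
      rw [hmean]
      refine integral_congr_ae (hω'.mono fun x hx => ?_)
      dsimp only
      rw [hx]
    rw [integral_congr_ae e1, integral_eq_lintegral_of_nonneg_ae
      (Filter.Eventually.of_forall fun ω' => integral_nonneg fun x => sq_nonneg _)
      (hinner_m i).aestronglyMeasurable]
    congr 1
    refine lintegral_congr_ae ?_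
    filter_upwards [hsecmem i] with ω' hsec
    have h8 : ∫ x, (g₁ (Function.update ω' i x)
        - ∫ y, g₁ (Function.update ω' i y) ∂μ i) ^ 2 ∂μ i
        = variance (fun x => g₁ (Function.update ω' i x)) (μ i) := by
      rw [variance_eq_integral hsec.aemeasurable]
    rw [h8, hsec.ofReal_variance_eq]
  have hES := efron_stein_evariance n μ g₁ hg₁meas hg₁
  have hEg : evariance g (Measure.pi μ) = evariance g₁ (Measure.pi μ) := by
    rw [evariance_eq_lintegral_ofReal, evariance_eq_lintegral_ofReal, integral_congr_ae hgg₁]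
    refine lintegral_congr_ae (hgg₁.mono fun ω h => ?_)
    dsimp only
    rw [h]
  set B := ∑ i, ∫ ω', (∫ x, (g (Function.update ω' i x)
      - ∫ y, g (Function.update ω' i y) ∂(μ i)) ^ 2 ∂(μ i)) ∂(Measure.pi μ) with hBdef
  have hsumfin : (∑ i, L i) ≠ ⊤ := by
    refine (ENNReal.sum_lt_top.2 fun i _ => ?_).ne
    exact (hLfin i).lt_top
  have hBL : B = (∑ i, L i).toReal := by
    rw [hBdef, ENNReal.toReal_sum (fun i _ => hLfin i)]
    exact Finset.sum_congr rfl fun i _ => hBi i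
  have hVar : variance g (Measure.pi μ) ≤ B := by
    rw [hBL]
    show (evariance g (Measure.pi μ)).toReal ≤ (∑ i, L i).toReal
    rw [hEg]
    exact ENNReal.toReal_mono hsumfin hES
  have hB0 : 0 ≤ B :=
    Finset.sum_nonneg fun i _ => integral_nonneg fun ω' => integral_nonneg fun x => sq_nonneg _
  rcases eq_or_lt_of_le hB0 with hBz | hBpos
  · -- B = 0 : g is a.e. constant
    have hsum0 : ∑ i, L i = 0 := by
      have h9 : (∑ i, L i).toReal = 0 := by rw [← hBL, ← hBz]
      rcases (ENNReal.toReal_eq_zero_iff _).1 h9 with h | h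
      · exact h
      · exact absurd h hsumfin
    have hEz : evariance g₁ (Measure.pi μ) = 0 :=
      le_antisymm (hsum0 ▸ hES) bot_le
    have hgm_ae : ∀ᵐ ω ∂Measure.pi μ, g₁ ω = ∫ x, g₁ x ∂Measure.pi μ :=
      (evariance_eq_zero_iff hg₁meas.aemeasurable).1 hEz
    have hm1 : ∫ x, g₁ x ∂Measure.pi μ = m := (integral_congr_ae hgg₁).symm
    have hgm : ∀ᵐ ω ∂Measure.pi μ, g ω = m := by
      filter_upwards [hgg₁, hgm_ae] with ω h1 h2
      rw [h1, h2, hm1]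
    have hset : (Measure.pi μ) {ω | Real.sqrt ((1/δ) * B) < |g ω - m|} = 0 := by
      refine measure_mono_null ?_ (ae_iff.1 hgm)
      intro ω hω
      simp only [Set.mem_setOf_eq] at hω ⊢
      intro h
      rw [h, sub_self, abs_zero] at hω
      exact absurd hω (not_lt.2 (Real.sqrt_nonneg _))
    rw [hset]
    exact bot_le
  · -- B > 0 : Chebyshev
    have hcpos : 0 < Real.sqrt ((1/δ) * B) :=
      Real.sqrt_pos.2 (mul_pos (by positivity) hBpos)
    have hcheb := meas_ge_le_variance_div_sq hg hcpos
    rw [← hm] at hcheb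
    have hsub : {ω | Real.sqrt ((1/δ) * B) < |g ω - m|}
        ⊆ {ω | Real.sqrt ((1/δ) * B) ≤ |g ω - m|} := fun ω h => le_of_lt (Set.mem_setOf_eq ▸ h)
    refine le_trans (measure_mono hsub) (le_trans hcheb ?_)
    apply ENNReal.ofReal_le_ofReal
    have hc2 : Real.sqrt ((1/δ) * B) ^ 2 = (1/δ) * B := Real.sq_sqrt (by positivity)
    rw [hc2, div_le_iff₀ (by positivity)]
    calc variance g (Measure.pi μ) ≤ B := hVar
      _ = δ * ((1/δ) * B) := by field_simp
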